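/- If X is a star-Scheepers space and Y is a σ-compact space, then the product X × Y is star-Scheepers. -/
import Mathlib

open Set

/-- The dominating number 𝔡: least cardinality of a dominating family in ℕ^ℕ. -/
noncomputable def dominatingNumber : Cardinal :=
  sInf { c | ∃ D : Set (ℕ → ℕ),
    (∀ g : ℕ → ℕ, ∃ f ∈ D, ∀ᶠ n in Filter.atTop, g n ≤ f n) ∧ c = Cardinal.mk D }

/-- `U` is an open cover of the space `X`. -/
def IsOpenCover {X : Type*} [TopologicalSpace X] (U : Set (Set X)) : Prop :=
  (∀ u ∈ U, IsOpen u) ∧ ⋃₀ U = Set.univ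

/-- The star of a set `A` with respect to a family `U`. -/
def starOf {X : Type*} (A : Set X) (U : Set (Set X)) : Set X :=
  ⋃₀ {B | B ∈ U ∧ (A ∩ B).Nonempty}

/-- The star-Scheepers property (ω-cover form). -/
def StarScheepers (X : Type*) [TopologicalSpace X] : Prop :=
  ∀ U : ℕ → Set (Set X), (∀ n, IsOpenCover (U n)) →
    ∃ V : ℕ → Set (Set X), (∀ n, V n ⊆ U n ∧ (V n).Finite) ∧
      ∀ F : Set X, F.Finite → ∃ n, F ⊆ starOf (⋃₀ V n) (U n)

/-- The strongly star-Scheepers property. -/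
def StronglyStarScheepers (X : Type*) [TopologicalSpace X] : Prop :=
  ∀ U : ℕ → Set (Set X), (∀ n, IsOpenCover (U n)) →
    ∃ F : ℕ → Set X, (∀ n, (F n).Finite) ∧
      ∀ G : Set X, G.Finite → ∃ n, G ⊆ starOf (F n) (U n)

/-- Auxiliary predicate: `𝒰` is a finite subfamily of `U` such that `V ×ˢ K ⊆ ⋃₀ 𝒰` and
every member of `𝒰` meets `{x} ×ˢ K` for every `x ∈ V`. -/
def GoodTube {X Y : Type*} (U : Set (Set (X × Y))) (K : Set Y) (V : Set X)
    (𝒰 : Set (Set (X × Y))) : Prop :=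
  𝒰 ⊆ U ∧ 𝒰.Finite ∧ (∀ x ∈ V, ∀ y ∈ K, (x, y) ∈ ⋃₀ 𝒰) ∧
    (∀ u ∈ 𝒰, ∀ x ∈ V, ∃ y ∈ K, (x, y) ∈ u)

lemma tube_cover {X Y : Type*} [TopologicalSpace X] [TopologicalSpace Y]
    (U : Set (Set (X × Y))) (hU : IsOpenCover U) (K : Set Y) (hK : IsCompact K) :
    IsOpenCover {V : Set X | IsOpen V ∧ ∃ 𝒰, GoodTube U K V 𝒰} := by
  constructor
  · exact fun V hV => hV.1
  · apply eq_univ_of_forall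
    intro x
    have hcomp : IsCompact (({x} : Set X) ×ˢ K) := isCompact_singleton.prod hK
    have hsub : ({x} : Set X) ×ˢ K ⊆ ⋃ u : U, (u : Set (X × Y)) := by
      rw [← sUnion_eq_iUnion, hU.2]; exact subset_univ _
    obtain ⟨t, ht⟩ := hcomp.elim_finite_subcover (fun u : U => (u : Set (X × Y)))
      (fun u => hU.1 u u.2) hsub
    set 𝒰 : Set (Set (X × Y)) :=
      (fun i : U => (i : Set (X × Y))) ''
        {i | i ∈ t ∧ ((({x} : Set X) ×ˢ K) ∩ (i : Set (X × Y))).Nonempty} with h𝒰def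
    have h𝒰sub : 𝒰 ⊆ U := by rintro _ ⟨i, _, rfl⟩; exact i.2
    have h𝒰fin : 𝒰.Finite := (t.finite_toSet.subset (fun i hi => hi.1)).image _
    have hcov : ({x} : Set X) ×ˢ K ⊆ ⋃₀ 𝒰 := by
      intro p hp
      obtain ⟨i, hit, hpi⟩ := mem_iUnion₂.1 (ht hp)
      exact ⟨i, ⟨i, ⟨hit, ⟨p, hp, hpi⟩⟩, rfl⟩, hpi⟩
    have hopen𝒰 : IsOpen (⋃₀ 𝒰) := isOpen_sUnion fun u hu => hU.1 u (h𝒰sub hu)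
    obtain ⟨u, v, hu, hv, hxu, hKv, huv⟩ :=
      generalized_tube_lemma isCompact_singleton hK hopen𝒰 hcov
    have hproj : ∀ w : Set (X × Y), IsOpen w → IsOpen {x' : X | ∃ y ∈ K, (x', y) ∈ w} := by
      intro w hw
      have heq : {x' : X | ∃ y ∈ K, (x', y) ∈ w} = ⋃ y ∈ K, (fun x' => (x', y)) ⁻¹' w := by
        ext x'; simp
      rw [heq]
      exact isOpen_biUnion fun y _ => hw.preimage (continuous_id.prodMk continuous_const)
    refine mem_sUnion.2 ⟨u ∩ ⋂ w ∈ 𝒰, {x' | ∃ y ∈ K, (x', y) ∈ w},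
      ⟨?_, 𝒰, h𝒰sub, h𝒰fin, ?_, ?_⟩, ?_⟩
    · exact hu.inter (h𝒰fin.isOpen_biInter fun w hw => hproj w (hU.1 w (h𝒰sub hw)))
    · intro x' hx' y hy
      exact huv ⟨hx'.1, hKv hy⟩
    · intro w hw x' hx'
      exact mem_iInter₂.1 hx'.2 w hw
    · refine ⟨hxu rfl, mem_iInter₂.2 fun w hw => ?_⟩
      obtain ⟨i, ⟨_, ⟨p, hp, hpi⟩⟩, rfl⟩ := hw
      obtain ⟨hp1, hp2⟩ := hp
      refine ⟨p.2, hp2, ?_⟩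
      have : p.1 = x := hp1
      rw [← this]
      exact hpi

theorem stmt_16 {X Y : Type*} [TopologicalSpace X] [TopologicalSpace Y]
    (hX : StarScheepers X) (hY : SigmaCompactSpace Y) :
    StarScheepers (X × Y) := by
  classical
  intro U hU
  have hH : ∀ n m : ℕ,
      IsOpenCover {V : Set X | IsOpen V ∧ ∃ 𝒰, GoodTube (U n) (compactCovering Y m) V 𝒰} :=
    fun n m => tube_cover (U n) (hU n) _ (isCompact_compactCovering Y m)
  have happ : ∀ m : ℕ, ∃ W : ℕ → Set (Set X),
      (∀ n, W n ⊆ {V : Set X | IsOpen V ∧ ∃ 𝒰, GoodTube (U (n + m)) (compactCovering Y m) V 𝒰}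
        ∧ (W n).Finite) ∧
      ∀ F : Set X, F.Finite → ∃ n, F ⊆ starOf (⋃₀ W n)
        {V : Set X | IsOpen V ∧ ∃ 𝒰, GoodTube (U (n + m)) (compactCovering Y m) V 𝒰} :=
    fun m => hX (fun n => {V | IsOpen V ∧ ∃ 𝒰, GoodTube (U (n + m)) (compactCovering Y m) V 𝒰})
      (fun n => hH (n + m) m)
  choose W hW1 hW2 using happ
  have hselex : ∀ (n m : ℕ) (V : Set X), ∃ 𝒰 : Set (Set (X × Y)),
      (∃ 𝒰', GoodTube (U n) (compactCovering Y m) V 𝒰') →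
        GoodTube (U n) (compactCovering Y m) V 𝒰 := by
    intro n m V
    by_cases h : ∃ 𝒰', GoodTube (U n) (compactCovering Y m) V 𝒰'
    · exact ⟨h.choose, fun _ => h.choose_spec⟩
    · exact ⟨∅, fun h' => absurd h' h⟩
  choose selF hsel using hselex
  refine ⟨fun k => ⋃ m ∈ Set.Iic k, ⋃ V ∈ W m (k - m), selF k m V, ?_, ?_⟩
  · intro k
    have hgood : ∀ m ∈ Set.Iic k, ∀ V ∈ W m (k - m),
        GoodTube (U k) (compactCovering Y m) V (selF k m V) := by
      intro m hm V hV
      have h1 := ((hW1 m (k - m)).1 hV).2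
      rw [Nat.sub_add_cancel hm] at h1
      exact hsel k m V h1
    constructor
    · intro w hw
      obtain ⟨m, hm, V, hV, hwsel⟩ := by
        simpa using hw
      exact (hgood m hm V hV).1 hwsel
    · exact (Set.finite_Iic k).biUnion fun m hm =>
        ((hW1 m (k - m)).2).biUnion fun V hV => (hgood m hm V hV).2.1
  · intro G hG
    choose f hf using fun y : Y => exists_mem_compactCovering (X := Y) y
    have hGsnd : (Prod.snd '' G).Finite := hG.image _
    set m : ℕ := hGsnd.toFinset.sup f with hmdef
    have hm : ∀ p ∈ G, p.2 ∈ compactCovering Y m := fun p hp =>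
      compactCovering_subset Y (Finset.le_sup (hGsnd.mem_toFinset.2 ⟨p, hp, rfl⟩)) (hf p.2)
    obtain ⟨n, hn⟩ := hW2 m (Prod.fst '' G) (hG.image _)
    refine ⟨n + m, fun p hp => ?_⟩
    obtain ⟨B, ⟨⟨hBopen, 𝒰B, hGoodB⟩, q0, hq0⟩, hxB⟩ := hn ⟨p, hp, rfl⟩
    obtain ⟨w, hw𝒰, hpw⟩ := hGoodB.2.2.1 p.1 hxB p.2 (hm p hp)
    obtain ⟨V', hV'W, hq0V'⟩ := hq0.1
    obtain ⟨y', hy'K, hqy'w⟩ := hGoodB.2.2.2 w hw𝒰 q0 hq0.2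
    have hex : ∃ 𝒰', GoodTube (U (n + m)) (compactCovering Y m) V' 𝒰' :=
      ((hW1 m n).1 hV'W).2
    have hGoodV' := hsel (n + m) m V' hex
    have hq0mem : (q0, y') ∈ ⋃₀ selF (n + m) m V' := hGoodV'.2.2.1 q0 hq0V' y' hy'K
    refine ⟨w, ⟨hGoodB.1 hw𝒰, ⟨(q0, y'), ?_, hqy'w⟩⟩, hpw⟩
    obtain ⟨s, hs1, hs2⟩ := hq0mem
    refine ⟨s, ?_, hs2⟩
    simp only [mem_iUnion]
    refine ⟨m, Nat.le_add_left m n, V', ?_, hs1⟩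
    rwa [Nat.add_sub_cancel]
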